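/- Let u(x) = ∑_{k ∈ F} c_k e^{2πi k·x} be a trigonometric polynomial on ℝ^d with finite F ⊂ ℤ^d, and let p ≥ 1 be a natural number. Define u_n(x) = u(nx). Then for every continuous compactly supported φ : ℝ^d → ℂ, lim_{n→∞} ∫ φ(x) (u_n(x))^p dx = ( ∑_{k_1,…,k_p ∈ F, k_1+⋯+k_p = 0} c_{k_1}⋯c_{k_p} ) · ∫ φ(x) dx. -/

import Mathlib

open MeasureTheory Filter Topology

noncomputable def expc {d : ℕ} (k : Fin d → ℤ) (x : Fin d → ℝ) : ℂ :=
  Complex.exp (2 * Real.pi * Complex.I * (∑ i, (k i : ℝ) * x i))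

lemma expc_sum {d p : ℕ} (K : Fin p → (Fin d → ℤ)) (x : Fin d → ℝ) :
    expc (∑ i, K i) x = ∏ i, expc (K i) x := by
  unfold expc
  rw [← Complex.exp_sum]
  congr 1
  rw [← Finset.mul_sum]
  congr 1
  push_cast
  rw [Finset.sum_comm]
  simp [Finset.sum_apply, Finset.sum_mul]

lemma expc_cont {d : ℕ} (k : Fin d → ℤ) (n : ℝ) :
    Continuous (fun x : Fin d → ℝ => expc k (n • x)) := by
  unfold expc
  fun_prop

lemma RL {d : ℕ} (φ : (Fin d → ℝ) → ℂ) (K : Fin d → ℤ) (hK : K ≠ 0) :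
    Tendsto (fun n : ℕ => ∫ x : Fin d → ℝ, φ x * expc K ((n : ℝ) • x)) atTop (𝓝 0) := by
  classical
  -- work on EuclideanSpace
  set E := EuclideanSpace ℝ (Fin d)
  let f : E → ℂ := fun v => φ v
  have main := tendsto_integral_exp_inner_smul_cocompact (V := E) (f := f)
  let wK : E := WithLp.toLp 2 (fun i => -(K i : ℝ))
  have hwK : wK ≠ 0 := fun h => hK (funext fun i => show K i = 0 by
    have h1 : -(K i : ℝ) = 0 := congrFun (congrArg WithLp.ofLp h) i
    have h2 : (K i : ℝ) = 0 := by linarith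
    exact_mod_cast h2)
  have hnorm : (0 : ℝ) < ‖wK‖ := norm_pos_iff.mpr hwK
  have hc : Tendsto (fun n : ℕ => ((n : ℝ) • wK : E)) atTop (cocompact E) := by
    apply tendsto_cocompact_of_tendsto_dist_comp_atTop (0 : E)
    simp only [dist_zero_right, norm_smul, Real.norm_natCast]
    exact (tendsto_natCast_atTop_atTop).atTop_mul_const hnorm
  have comp := main.comp hc
  convert comp using 2 with n
  rw [Function.comp_apply,
    ← MeasurePreserving.integral_comp (EuclideanSpace.volume_preserving_symm_measurableEquiv_toLp (Fin d))
      (MeasurableEquiv.toLp 2 (Fin d → ℝ)).symm.measurableEmbedding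
      (fun x : Fin d → ℝ => φ x * expc K ((n : ℝ) • x))]
  refine integral_congr_ae (Filter.Eventually.of_forall fun v => ?_)
  show φ v * expc K ((n : ℝ) • v) = Real.fourierChar (-(inner ℝ v ((n:ℝ) • wK) : ℝ)) • f v
  have hin : (inner ℝ v ((n:ℝ) • wK) : ℝ) = (n:ℝ) * ∑ i, (v i) * (-(K i : ℝ)) := by
    rw [real_inner_smul_right]
    congr 1
    rw [PiLp.inner_apply]; refine Finset.sum_congr rfl fun i _ => ?_; simp [wK, mul_comm]
  rw [Circle.smul_def, Real.fourierChar_apply, hin, mul_comm]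
  congr 1
  unfold expc
  congr 1
  simp only [mul_neg, Finset.sum_neg_distrib, neg_neg, Pi.smul_apply, smul_eq_mul]
  push_cast
  simp only [Finset.mul_sum, Finset.sum_mul]
  refine Finset.sum_congr rfl fun i _ => by push_cast; ring

/-- The limit of `∫ φ (u_n)^p` for a rescaled trigonometric polynomial is the
sum of products of coefficients over all `p`-tuples of frequencies in `F`
summing to zero, times `∫ φ`. -/
theorem trigPoly_power_limit {d p : ℕ} (hp : 1 ≤ p) (F : Finset (Fin d → ℤ))
    (c : (Fin d → ℤ) → ℂ)
    (φ : (Fin d → ℝ) → ℂ) (hφc : Continuous φ) (hφs : HasCompactSupport φ) :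
    Tendsto
      (fun n : ℕ => ∫ x : Fin d → ℝ,
        φ x * (∑ k ∈ F, c k * expc k ((n : ℝ) • x)) ^ p)
      atTop
      (nhds
        ((∑ k ∈ (Fintype.piFinset fun _ : Fin p => F).filter
            (fun k => ∑ i, k i = 0), ∏ i, c (k i)) * ∫ x : Fin d → ℝ, φ x)) := by
  classical
  set S := Fintype.piFinset fun _ : Fin p => F with hS
  have hint : ∀ (n : ℕ) (k : Fin d → ℤ),
      Integrable (fun x : Fin d → ℝ => φ x * expc k ((n : ℝ) • x)) := fun n k =>
    Continuous.integrable_of_hasCompactSupport (hφc.mul (expc_cont k n)) hφs.mul_right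
  have key : ∀ n : ℕ, (∫ x : Fin d → ℝ, φ x * (∑ k ∈ F, c k * expc k ((n : ℝ) • x)) ^ p)
      = ∑ K ∈ S, (∏ i, c (K i)) * ∫ x : Fin d → ℝ, φ x * expc (∑ i, K i) ((n : ℝ) • x) := by
    intro n
    have hpt : ∀ x : Fin d → ℝ, φ x * (∑ k ∈ F, c k * expc k ((n : ℝ) • x)) ^ p
        = ∑ K ∈ S, (∏ i, c (K i)) * (φ x * expc (∑ i, K i) ((n : ℝ) • x)) := by
      intro x
      rw [← Fin.prod_const p (∑ k ∈ F, c k * expc k ((n : ℝ) • x)), Finset.prod_univ_sum,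
        Finset.mul_sum]
      refine Finset.sum_congr rfl fun K _ => ?_
      rw [Finset.prod_mul_distrib, expc_sum]
      ring
    simp_rw [hpt]
    rw [integral_finset_sum _ (fun K _ => ((hint n (∑ i, K i)).const_mul _))]
    exact Finset.sum_congr rfl fun K _ => integral_const_mul _ _
  have hlim : ∀ K ∈ S, Tendsto
      (fun n : ℕ => (∏ i, c (K i)) * ∫ x : Fin d → ℝ, φ x * expc (∑ i, K i) ((n : ℝ) • x))
      atTop
      (𝓝 ((∏ i, c (K i)) * (if (∑ i, K i) = 0 then ∫ x : Fin d → ℝ, φ x else 0))) := by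
    intro K _
    refine Tendsto.const_mul _ ?_
    by_cases h : (∑ i, K i) = 0
    · simp only [h, if_true]
      have hz : (fun n : ℕ => ∫ x : Fin d → ℝ, φ x * expc 0 ((n : ℝ) • x))
          = fun _ : ℕ => ∫ x : Fin d → ℝ, φ x := by
        funext n
        simp [expc]
      rw [hz]
      exact tendsto_const_nhds
    · simp only [h, if_false]
      exact RL φ _ h
  have hval : (∑ K ∈ S.filter (fun k => ∑ i, k i = 0), ∏ i, c (K i)) * (∫ x : Fin d → ℝ, φ x)
      = ∑ K ∈ S, (∏ i, c (K i)) * (if (∑ i, K i) = 0 then ∫ x : Fin d → ℝ, φ x else 0) := by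
    rw [Finset.sum_mul, Finset.sum_filter]
    refine Finset.sum_congr rfl fun K _ => ?_
    split <;> simp
  simp_rw [key]
  rw [hval]
  exact tendsto_finset_sum S hlim
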